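/- Let L be a complete lattice and X a set of elements of L not containing ⊤. If the finer patch topology (X, τ^fp) is compact, then the classical Zariski topology (X, τ^cl) is compact, T0, sober, and has a basis of compact open sets that is closed under finite intersections (hence (X, τ^cl) is a spectral space). -/

import Mathlib

namespace ZariskiLattice

variable {L : Type*} [CompleteLattice L]

/-- The variety of `a` inside `X`: the points of `X` above `a`. -/
def V (X : Set L) (a : L) : Set X := {p : X | a ≤ (p : L)}

/-- The classical Zariski topology on `X`, generated by the subbase
`{X \ V a | a ∈ L}`. -/
def tauCl (X : Set L) : TopologicalSpace X :=
  TopologicalSpace.generateFrom {s : Set X | ∃ a : L, s = (V X a)ᶜ}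

/-- The finer patch topology on `X`, generated by the subbase
`{V a ∩ (X \ V b) | a, b ∈ L}`. -/
def tauFp (X : Set L) : TopologicalSpace X :=
  TopologicalSpace.generateFrom {s : Set X | ∃ a b : L, s = V X a ∩ (V X b)ᶜ}

/-- `I(A) = ⨅_{p ∈ A} p` for a subset `A ⊆ X`. -/
def lanI (X : Set L) (A : Set X) : L := ⨅ p ∈ A, (p : L)

/-- The radical `√a = I(V(a))` of an element `a`. -/
def rad (X : Set L) (a : L) : L := lanI X (V X a)

/-- The set of radical elements `C(L) = {a | √a = a}`. -/
def CL (X : Set L) : Set L := {a : L | rad X a = a}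

/-- `L` is `X`-top: the varieties are closed under finite unions. -/
def IsXTop (X : Set L) : Prop := ∀ a b : L, ∃ c : L, V X a ∪ V X b = V X c

/-- The set of maximal elements of `C(L) \ {⊤}`. -/
def MaxC (X : Set L) : Set L :=
  {q : L | q ∈ CL X ∧ q ≠ ⊤ ∧ ∀ r ∈ CL X, r ≠ ⊤ → q ≤ r → r = q}

/-- `C(L)` satisfies the complete max property. -/
def CompleteMax (X : Set L) : Prop :=
  ∀ q ∈ MaxC X, ¬ (⨅ p ∈ MaxC X \ {q}, p) ≤ q

open Set TopologicalSpace

lemma V_bot (X : Set L) : V X ⊥ = Set.univ := by ext p; simp [V]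

lemma V_top (X : Set L) (hX : (⊤ : L) ∉ X) : V X ⊤ = (∅ : Set X) := by
  ext p
  simp only [V, Set.mem_setOf_eq, top_le_iff, Set.mem_empty_iff_false, iff_false]
  intro h
  exact hX (h ▸ p.2)

lemma isOpen_fp_V_compl (X : Set L) (a : L) : @IsOpen _ (tauFp X) (V X a)ᶜ := by
  have h : (V X a)ᶜ = V X ⊥ ∩ (V X a)ᶜ := by rw [V_bot, Set.univ_inter]
  rw [h]
  exact TopologicalSpace.GenerateOpen.basic _ ⟨⊥, a, rfl⟩

lemma isOpen_fp_V (X : Set L) (hX : (⊤ : L) ∉ X) (a : L) : @IsOpen _ (tauFp X) (V X a) := by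
  have h : V X a = V X a ∩ (V X ⊤)ᶜ := by
    rw [V_top X hX, Set.compl_empty, Set.inter_univ]
  rw [h]
  exact TopologicalSpace.GenerateOpen.basic _ ⟨a, ⊤, rfl⟩

lemma isOpen_cl_V_compl (X : Set L) (a : L) : @IsOpen _ (tauCl X) (V X a)ᶜ :=
  TopologicalSpace.GenerateOpen.basic _ ⟨a, rfl⟩

lemma isClosed_cl_V (X : Set L) (a : L) : @IsClosed _ (tauCl X) (V X a) := by
  letI := tauCl X
  exact isOpen_compl_iff.mp (isOpen_cl_V_compl X a)

lemma fp_le_cl (X : Set L) : tauFp X ≤ tauCl X :=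
  le_generateFrom (by rintro s ⟨a, rfl⟩; exact isOpen_fp_V_compl X a)

lemma isCompact_cl_of_fp (X : Set L) {s : Set X} (h : @IsCompact _ (tauFp X) s) :
    @IsCompact _ (tauCl X) s := by
  have := @IsCompact.image _ _ (tauFp X) (tauCl X) _ id h (continuous_id_of_le (fp_le_cl X))
  simpa using this

lemma mem_of_genOpen {X : Set L} {g q : X} (hle : (g : L) ≤ q) {U : Set X}
    (hU : TopologicalSpace.GenerateOpen {s : Set X | ∃ a : L, s = (V X a)ᶜ} U)
    (hq : q ∈ U) : g ∈ U := by
  induction hU with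
  | basic s hs =>
    obtain ⟨a, rfl⟩ := hs
    exact fun h => hq (h.trans hle)
  | univ => trivial
  | inter s t _ _ ihs iht => exact ⟨ihs hq.1, iht hq.2⟩
  | sUnion S _ ih =>
    obtain ⟨s, hsS, hqs⟩ := hq
    exact ⟨s, hsS, ih s hsS hqs⟩

lemma closure_singleton_cl (X : Set L) (g : X) :
    @closure _ (tauCl X) {g} = V X (g : L) := by
  letI := tauCl X
  apply subset_antisymm
  · exact closure_minimal (by simp [V]) (isClosed_cl_V X g)
  · intro q hq
    rw [mem_closure_iff]
    intro o ho hqo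
    exact ⟨g, mem_of_genOpen hq ho hqo, rfl⟩

/-- If `(X, τ^fp)` is compact, then `(X, τ^cl)` is compact, T0, sober,
and has a basis of compact open sets closed under finite intersections (hence it is
a spectral space). -/
theorem spectral_of_patch_compact (X : Set L) (hX : (⊤ : L) ∉ X)
    (hfp : @CompactSpace ↥X (tauFp X)) :
    @CompactSpace ↥X (tauCl X) ∧
    @T0Space ↥X (tauCl X) ∧
    (∀ F : Set X, @IsClosed ↥X (tauCl X) F → @IsIrreducible ↥X (tauCl X) F →
      ∃! g : X, @closure ↥X (tauCl X) {g} = F) ∧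
    (∃ B : Set (Set X), @TopologicalSpace.IsTopologicalBasis ↥X (tauCl X) B ∧
      (∀ s ∈ B, @IsCompact ↥X (tauCl X) s) ∧
      (∀ s ∈ B, ∀ t ∈ B, s ∩ t ∈ B)) := by
  classical
  refine ⟨?_, ?_, ?_, ?_⟩
  · exact @CompactSpace.mk _ (tauCl X) (isCompact_cl_of_fp X (@isCompact_univ _ (tauFp X) hfp))
  · letI := tauCl X
    refine ⟨fun x y h => ?_⟩
    have hc : V X (x : L) = V X (y : L) := by
      rw [← closure_singleton_cl, ← closure_singleton_cl]
      exact inseparable_iff_closure_eq.mp h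
    have h1 : (y : L) ≤ x := by
      have hx : x ∈ V X (x : L) := le_refl _
      rw [hc] at hx; exact hx
    have h2 : (x : L) ≤ y := by
      have hy : y ∈ V X (y : L) := le_refl _
      rw [← hc] at hy; exact hy
    exact Subtype.ext (le_antisymm h2 h1)
  · intro F hFc hFi
    -- F is fp-closed and fp-compact
    have hFfp : @IsClosed _ (tauFp X) F := hFc.mono (fp_le_cl X)
    have hFcpt : @IsCompact _ (tauFp X) F := by
      letI := tauFp X
      exact hFfp.isCompact
    -- finite intersection property via irreducibility
    have hfin : ∀ u : Finset {b : L // (F ∩ (V X b)ᶜ).Nonempty},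
        (F ∩ ⋂ i ∈ u, (V X i.1)ᶜ).Nonempty := by
      intro u
      letI := tauCl X
      have h := (isIrreducible_iff_sInter.mp hFi)
        (u.image fun i => (V X i.1)ᶜ)
        (by
          intro s hs
          simp only [Finset.mem_image] at hs
          obtain ⟨i, _, rfl⟩ := hs
          exact isOpen_cl_V_compl X i.1)
        (by
          intro s hs
          simp only [Finset.mem_image] at hs
          obtain ⟨i, _, rfl⟩ := hs
          exact i.2)
      rwa [Finset.coe_image, sInter_image] at h
    have key : (F ∩ ⋂ i : {b : L // (F ∩ (V X b)ᶜ).Nonempty}, (V X i.1)ᶜ).Nonempty := by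
      letI := tauFp X
      exact hFcpt.inter_iInter_nonempty _
        (fun i => (isOpen_fp_V X hX i.1).isClosed_compl) hfin
    obtain ⟨g, hgF, hg⟩ := key
    letI := tauCl X
    have hVgF : V X (g : L) = F := by
      apply subset_antisymm
      · rw [← closure_singleton_cl]
        exact closure_minimal (Set.singleton_subset_iff.mpr hgF) hFc
      · intro q hq
        by_contra hgq
        have hne : (F ∩ (V X (g : L))ᶜ).Nonempty := ⟨q, hq, hgq⟩
        have := Set.mem_iInter.mp hg ⟨(g : L), hne⟩
        exact this (le_refl _)
    refine ⟨g, ?_, ?_⟩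
    · show @closure _ (tauCl X) {g} = F
      rw [closure_singleton_cl]; exact hVgF
    · intro g' hg'
      have hg'' : V X (g' : L) = F := by rw [← closure_singleton_cl]; exact hg'
      have h1 : g' ∈ V X (g : L) := by rw [hVgF]; rw [← hg'']; exact le_refl _
      have h2 : g ∈ V X (g' : L) := by rw [hg'']; rw [← hVgF]; exact le_refl _
      exact Subtype.ext (le_antisymm h2 h1)
  · refine ⟨(fun f => ⋂₀ f) '' {f : Set (Set X) | f.Finite ∧ f ⊆ {s : Set X | ∃ a : L, s = (V X a)ᶜ}},
      ?_, ?_, ?_⟩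
    · exact @isTopologicalBasis_of_subbasis _ (tauCl X) _ rfl
    · rintro _ ⟨f, ⟨hf, hfs⟩, rfl⟩
      apply isCompact_cl_of_fp
      letI := tauFp X
      refine IsClosed.isCompact (isClosed_sInter ?_)
      intro t ht
      obtain ⟨a, rfl⟩ := hfs ht
      exact (isOpen_fp_V X hX a).isClosed_compl
    · rintro _ ⟨f₁, ⟨hf₁, hs₁⟩, rfl⟩ _ ⟨f₂, ⟨hf₂, hs₂⟩, rfl⟩
      exact ⟨f₁ ∪ f₂, ⟨hf₁.union hf₂, Set.union_subset hs₁ hs₂⟩, Set.sInter_union f₁ f₂⟩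


end ZariskiLattice
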